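/- For every purely imaginary unit quaternion e (in particular for e ∈ {i, j, k}), the ℂ-linear extension of left multiplication L_e to ℍ⊗ℂ maps η into η. -/

import Mathlib

open scoped Quaternion RealInnerProductSpace

private lemma qnorm' (z : ℍ[ℝ]) : ‖z‖^2 = z.re^2 + z.imI^2 + z.imJ^2 + z.imK^2 := by
  rw [sq, ← Quaternion.normSq_eq_norm_mul_self, Quaternion.normSq_def']

private lemma qinner_mul' (g h z : ℍ[ℝ]) : ⟪g*z, h*z⟫ = ‖z‖^2 * ⟪g,h⟫ := by
  simp only [Quaternion.inner_def, qnorm',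
    Quaternion.re_mul, Quaternion.imI_mul, Quaternion.imJ_mul, Quaternion.imK_mul,
    Quaternion.re_star, Quaternion.imI_star, Quaternion.imJ_star, Quaternion.imK_star]
  ring

private lemma qsq' (u : ℍ[ℝ]) (hre : u.re = 0) (hn : ‖u‖ = 1) : u * u = -1 := by
  have h2 : u.re^2 + u.imI^2 + u.imJ^2 + u.imK^2 = 1 := by rw [← qnorm', hn]; norm_num
  ext <;>
    simp only [Quaternion.re_mul, Quaternion.imI_mul, Quaternion.imJ_mul, Quaternion.imK_mul,
      hre, Quaternion.re_neg, Quaternion.imI_neg, Quaternion.imJ_neg, Quaternion.imK_neg,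
      Quaternion.re_one, Quaternion.imI_one, Quaternion.imJ_one, Quaternion.imK_one] <;>
    nlinarith [h2]

private lemma qanticomm' (u e : ℍ[ℝ]) (hu : u.re = 0) (he : e.re = 0) :
    u * e + e * u = ((-2 * ⟪e,u⟫ : ℝ) : ℍ[ℝ]) := by
  ext <;>
    simp only [Quaternion.inner_def, Quaternion.re_mul, Quaternion.imI_mul, Quaternion.imJ_mul,
      Quaternion.imK_mul, Quaternion.re_add, Quaternion.imI_add, Quaternion.imJ_add,
      Quaternion.imK_add, Quaternion.re_star, Quaternion.imI_star, Quaternion.imJ_star,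
      Quaternion.imK_star, Quaternion.re_coe, Quaternion.imI_coe, Quaternion.imJ_coe,
      Quaternion.imK_coe, hu, he] <;> ring

private lemma qspan' (u : ℍ[ℝ]) (hu_unit : ‖u‖ = 1) (hu_im : u.re = 0)
    (ξ : Submodule ℝ ℍ[ℝ]) (hdim : Module.finrank ℝ ξ = 2) (hJ : ∀ x ∈ ξ, u * x ∈ ξ) :
    ∃ x₀ ∈ ξ, x₀ ≠ 0 ∧ ξ ≤ Submodule.span ℝ ({x₀, u * x₀} : Set ℍ[ℝ]) := by
  have hbot : ξ ≠ ⊥ := by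
    intro h; rw [h] at hdim; simp at hdim
  obtain ⟨x₀, hx₀ξ, hx₀⟩ := Submodule.exists_mem_ne_zero_of_ne_bot hbot
  refine ⟨x₀, hx₀ξ, hx₀, ?_⟩
  have hinner : ⟪x₀, u * x₀⟫ = 0 := by
    have := qinner_mul' 1 u x₀
    rw [one_mul] at this
    rw [this, Quaternion.inner_def]
    simp [hu_im]
  have li : LinearIndependent ℝ ![x₀, u * x₀] := by
    rw [LinearIndependent.pair_iff' hx₀]
    intro a ha
    have h1 : ⟪x₀, u * x₀⟫ = a * ‖x₀‖^2 := by
      rw [← ha, real_inner_smul_right, real_inner_self_eq_norm_sq]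
    have hxn : ‖x₀‖ ≠ 0 := norm_ne_zero_iff.mpr hx₀
    have ha0 : a = 0 := by
      rw [hinner] at h1
      rcases mul_eq_zero.mp h1.symm with h | h
      · exact h
      · exact absurd h (pow_ne_zero 2 hxn)
    rw [ha0, zero_smul] at ha
    have : u * x₀ ≠ 0 := by
      intro h
      have := norm_mul u x₀
      rw [h, hu_unit, one_mul, norm_zero] at this
      exact hxn this.symm
    exact this ha.symm
  have hspan : Submodule.span ℝ ({x₀, u * x₀} : Set ℍ[ℝ]) ≤ ξ := by
    rw [Submodule.span_le]
    rintro z (rfl | rfl)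
    · exact hx₀ξ
    · exact hJ _ hx₀ξ
  have hrange : Set.range ![x₀, u * x₀] = ({x₀, u * x₀} : Set ℍ[ℝ]) := by
    ext z; simp [Fin.exists_fin_two]; tauto
  have hfr : Module.finrank ℝ (Submodule.span ℝ ({x₀, u * x₀} : Set ℍ[ℝ])) = 2 := by
    rw [← hrange, finrank_span_eq_card li]
    simp
  exact le_of_eq (Submodule.eq_of_le_of_finrank_le hspan (by rw [hfr, hdim])).symm

private lemma qperp' (ξ ν : Submodule ℝ ℍ[ℝ])
    (horth : ∀ x ∈ ξ, ∀ y ∈ ν, ⟪x, y⟫ = 0)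
    (hcompl : IsCompl ξ ν) (w : ℍ[ℝ]) (hw : ∀ x ∈ ξ, ⟪w, x⟫ = 0) : w ∈ ν := by
  have : w ∈ ξ ⊔ ν := by rw [hcompl.sup_eq_top]; trivial
  obtain ⟨x, hx, y, hy, rfl⟩ := Submodule.mem_sup.mp this
  have h1 : ⟪x + y, x⟫ = 0 := hw x hx
  have h2 : ⟪x, y⟫ = 0 := horth x hx y hy
  have h2' : ⟪y, x⟫ = 0 := by rw [real_inner_comm]; exact h2
  rw [inner_add_left, h2', add_zero, real_inner_self_eq_norm_sq] at h1
  have : x = 0 := by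
    rw [← norm_eq_zero]; nlinarith [norm_nonneg x]
  rw [this, zero_add]; exact hy

private lemma qswap' (u : ℍ[ℝ]) (hu_im : u.re = 0) (hu_unit : ‖u‖ = 1)
    (ξ ν : Submodule ℝ ℍ[ℝ]) (hξdim : Module.finrank ℝ ξ = 2)
    (horth : ∀ x ∈ ξ, ∀ y ∈ ν, ⟪x, y⟫ = 0)
    (hcompl : IsCompl ξ ν) (hJξ : ∀ x ∈ ξ, u * x ∈ ξ)
    (f : ℍ[ℝ]) (hf_im : f.re = 0) (hfu : ⟪f, u⟫ = 0) :
    ∀ x ∈ ξ, f * x ∈ ν := by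
  obtain ⟨x₀, hx₀ξ, hx₀, hspan⟩ := qspan' u hu_unit hu_im ξ hξdim hJξ
  have hf1 : ⟪f, (1:ℍ[ℝ])⟫ = 0 := by
    rw [Quaternion.inner_def]; simpa using hf_im
  have hfu' : ⟪f * u, (1:ℍ[ℝ])⟫ = 0 := by
    rw [Quaternion.inner_def] at hfu ⊢
    simp only [star_one, mul_one, Quaternion.re_mul, Quaternion.re_star,
      Quaternion.imI_star, Quaternion.imJ_star, Quaternion.imK_star, hu_im, hf_im] at hfu ⊢
    linarith
  have key : ∀ x ∈ ξ, ∀ x' ∈ ξ, ⟪f * x, x'⟫ = 0 := by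
    intro x hx x' hx'
    obtain ⟨a, b, hab⟩ := Submodule.mem_span_pair.mp (hspan hx)
    obtain ⟨c, d, hcd⟩ := Submodule.mem_span_pair.mp (hspan hx')
    have e1 : ⟪f * x₀, x₀⟫ = 0 := by
      have := qinner_mul' f 1 x₀; rw [one_mul] at this; rw [this, hf1, mul_zero]
    have e2 : ⟪f * x₀, u * x₀⟫ = 0 := by
      rw [qinner_mul' f u x₀, hfu, mul_zero]
    have e3 : ⟪f * (u * x₀), x₀⟫ = 0 := by
      have := qinner_mul' (f * u) 1 x₀
      rw [one_mul, mul_assoc] at this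
      rw [this, hfu', mul_zero]
    have e4 : ⟪f * (u * x₀), u * x₀⟫ = 0 := by
      have := qinner_mul' f 1 (u * x₀); rw [one_mul] at this; rw [this, hf1, mul_zero]
    rw [← hab, ← hcd]
    rw [mul_add, mul_smul_comm, mul_smul_comm]
    simp only [inner_add_left, inner_add_right, real_inner_smul_left,
      real_inner_smul_right, e1, e2, e3, e4]
    ring
  intro x hx
  exact qperp' ξ ν horth hcompl (f * x) (fun x' hx' => key x hx x' hx')

theorem left_mul_preserves_eta
    (u : ℍ[ℝ]) (hu_im : u.re = 0) (hu_unit : ‖u‖ = 1)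
    (ξ ν : Submodule ℝ ℍ[ℝ])
    (hξdim : Module.finrank ℝ ξ = 2) (hνdim : Module.finrank ℝ ν = 2)
    (horth : ∀ x ∈ ξ, ∀ y ∈ ν, ⟪x, y⟫ = 0)
    (hcompl : IsCompl ξ ν)
    (hJξ : ∀ x ∈ ξ, u * x ∈ ξ) (hJν : ∀ y ∈ ν, u * y ∈ ν)
    (νp ξm η : Set (ℍ[ℝ] × ℍ[ℝ]))
    -- `(a,b) ∈ ν⁺` iff `a, b ∈ ν` and `J(a + ib) = i(a + ib)`
    (hνp : νp = {p : ℍ[ℝ] × ℍ[ℝ] |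
      p.1 ∈ ν ∧ p.2 ∈ ν ∧ u * p.1 = -p.2 ∧ u * p.2 = p.1})
    -- `(a,b) ∈ ξ⁻` iff `a, b ∈ ξ` and `J(a + ib) = -i(a + ib)`
    (hξm : ξm = {p : ℍ[ℝ] × ℍ[ℝ] |
      p.1 ∈ ξ ∧ p.2 ∈ ξ ∧ u * p.1 = p.2 ∧ u * p.2 = -p.1})
    (hη : η = {v : ℍ[ℝ] × ℍ[ℝ] | ∃ s ∈ νp, ∃ w ∈ ξm, v = s + w})
    (e : ℍ[ℝ]) (he_im : e.re = 0) (he_unit : ‖e‖ = 1) :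
    ∀ v ∈ η, ((e * v.1, e * v.2) : ℍ[ℝ] × ℍ[ℝ]) ∈ η := by
  subst hνp hξm hη
  rintro v ⟨s, ⟨hs1, hs2, hs3, hs4⟩, w, ⟨hw1, hw2, hw3, hw4⟩, rfl⟩
  set α : ℝ := ⟪e, u⟫ with hα
  obtain ⟨f, hf⟩ : ∃ f : ℍ[ℝ], f = e - (α : ℍ[ℝ]) * u := ⟨_, rfl⟩
  -- basic facts
  have huu : u * u = -1 := qsq' u hu_im hu_unit
  have hf_im : f.re = 0 := by
    rw [hf]
    simp [Quaternion.re_sub, Quaternion.re_mul, Quaternion.re_coe, Quaternion.imI_coe,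
      Quaternion.imJ_coe, Quaternion.imK_coe, he_im, hu_im]
  have hfu : ⟪f, u⟫ = 0 := by
    rw [hf, inner_sub_left, Quaternion.coe_mul_eq_smul, real_inner_smul_left,
      real_inner_self_eq_norm_sq, hu_unit]
    simp [← hα]
  have heu : u * e + e * u = -(2 * (α : ℍ[ℝ])) := by
    rw [qanticomm' u e hu_im he_im, ← hα]
    have h2 : ((2:ℝ) : ℍ[ℝ]) = (2 : ℍ[ℝ]) := by
      norm_cast
    push_cast [h2]
    noncomm_ring
  have hcu : u * (α : ℍ[ℝ]) = (α : ℍ[ℝ]) * u := (Quaternion.coe_commutes α u).symm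
  have hB : ∀ X : ℍ[ℝ], u * (u * X) = -X := by
    intro X; rw [← mul_assoc, huu, neg_one_mul]
  have hC : ∀ X : ℍ[ℝ], u * ((α : ℍ[ℝ]) * X) = (α : ℍ[ℝ]) * (u * X) := by
    intro X; rw [← mul_assoc, hcu, mul_assoc]
  have hD : ∀ X : ℍ[ℝ], u * (e * X) = -(2 * ((α : ℍ[ℝ]) * X)) - e * (u * X) := by
    intro X
    have h := congrArg (fun z => z * X) heu
    simp only [add_mul, neg_mul, mul_assoc] at h
    linear_combination (norm := noncomm_ring) h
  have hfX : ∀ X : ℍ[ℝ], f * X = e * X - (α : ℍ[ℝ]) * (u * X) := by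
    intro X; rw [hf]; noncomm_ring
  have hufX : ∀ X : ℍ[ℝ], u * (f * X) = -(e * (u * X)) - (α : ℍ[ℝ]) * X := by
    intro X
    rw [hfX, mul_sub, hD, hC, hB]
    noncomm_ring
  -- the swaps
  have horth' : ∀ y ∈ ν, ∀ x ∈ ξ, ⟪y, x⟫ = 0 := by
    intro y hy x hx; rw [real_inner_comm]; exact horth x hx y hy
  have key1 : ∀ a ∈ ν, f * a ∈ ξ :=
    qswap' u hu_im hu_unit ν ξ hνdim horth' hcompl.symm hJν f hf_im hfu
  have key2 : ∀ x ∈ ξ, f * x ∈ ν :=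
    qswap' u hu_im hu_unit ξ ν hξdim horth hcompl hJξ f hf_im hfu
  -- witnesses
  refine ⟨((α : ℍ[ℝ]) * (u * s.1) + f * w.1, (α : ℍ[ℝ]) * s.1 - u * (f * w.1)),
    ⟨?_, ?_, ?_, ?_⟩,
    (f * s.1 + (α : ℍ[ℝ]) * (u * w.1), u * (f * s.1) - (α : ℍ[ℝ]) * w.1),
    ⟨?_, ?_, ?_, ?_⟩, ?_⟩
  · exact Submodule.add_mem ν
      (Quaternion.coe_mul_eq_smul α _ ▸ Submodule.smul_mem ν α (hJν _ hs1))
      (key2 _ hw1)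
  · exact Submodule.sub_mem ν
      (Quaternion.coe_mul_eq_smul α _ ▸ Submodule.smul_mem ν α hs1)
      (hJν _ (key2 _ hw1))
  · show u * ((α : ℍ[ℝ]) * (u * s.1) + f * w.1) = -((α : ℍ[ℝ]) * s.1 - u * (f * w.1))
    rw [mul_add, hC, hB]
    noncomm_ring
  · show u * ((α : ℍ[ℝ]) * s.1 - u * (f * w.1)) = (α : ℍ[ℝ]) * (u * s.1) + f * w.1
    rw [mul_sub, hC, hB]
    noncomm_ring
  · exact Submodule.add_mem ξ (key1 _ hs1)
      (Quaternion.coe_mul_eq_smul α _ ▸ Submodule.smul_mem ξ α (hJξ _ hw1))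
  · exact Submodule.sub_mem ξ (hJξ _ (key1 _ hs1))
      (Quaternion.coe_mul_eq_smul α _ ▸ Submodule.smul_mem ξ α hw1)
  · show u * (f * s.1 + (α : ℍ[ℝ]) * (u * w.1)) = u * (f * s.1) - (α : ℍ[ℝ]) * w.1
    rw [mul_add, hC, hB]
    noncomm_ring
  · show u * (u * (f * s.1) - (α : ℍ[ℝ]) * w.1) = -(f * s.1 + (α : ℍ[ℝ]) * (u * w.1))
    rw [mul_sub, hC, hB]
    noncomm_ring
  · have hs2' : s.2 = -(u * s.1) := by rw [hs3, neg_neg]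
    have hw2' : w.2 = u * w.1 := hw3.symm
    have h1 : e * (s + w).1 =
        ((α : ℍ[ℝ]) * (u * s.1) + f * w.1) + (f * s.1 + (α : ℍ[ℝ]) * (u * w.1)) := by
      rw [Prod.fst_add, hfX, hfX]
      noncomm_ring
    have h2 : e * (s + w).2 =
        ((α : ℍ[ℝ]) * s.1 - u * (f * w.1)) + (u * (f * s.1) - (α : ℍ[ℝ]) * w.1) := by
      rw [Prod.snd_add, hs2', hw2', hufX, hufX]
      noncomm_ring
    exact Prod.ext h1 h2
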